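/- (Monotonicity Lemma) Let 0 ≤ α < n, 0 < δ ≤ 1, and let K(x,y) be an α-standard fractional kernel of order 1+δ with constant C_CZ. Let ω be a positive locally finite Borel measure on ℝⁿ, let J be a cube with 0 < ω(J) < ∞, and let μ be a positive locally finite Borel measure with supp μ ∩ 2J = ∅ and P^α(J,μ) < ∞. Set m_J := ω(J)^{−1} ∫_J x dω(x). Then for every h ∈ L²(ω) supported in J with ∫ h dω = 0, the iterated integral ∫ ( ∫_J (K(x,y) − K(m_J,y)) h(x) dω(x) ) dμ(y) converges absolutely and satisfies: |∫ ( ∫_J (K(x,y) − K(m_J,y)) h(x) dω(x) ) dμ(y)| ≤ C·C_CZ·[ (P^α(J,μ)/ℓ(J)) · |∫_J (x − m_J) h(x) dω(x)|_{ℝⁿ} + (P^α_{1+δ}(J,μ)/ℓ(J)) · ∫_J |x − m_J| |h(x)| dω(x) ], where C depends only on n, α and δ. (When moreover ∫ (ℓ(J)+|y−c_J|)^{α−n} dμ(y) < ∞, the left-hand side equals ∫∫ K(x,y) h(x) dω(x) dμ(y).) -/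

import Mathlib

open MeasureTheory
open scoped ENNReal NNReal

noncomputable section

/-- An axis-parallel half-open cube in `ℝⁿ`, given by its corner `a` and side length `l`. -/
structure QCube (n : ℕ) where
  a : Fin n → ℝ
  l : ℝ

/-- The half-open cube as a subset of `ℝⁿ`. -/
def QCube.pts {n : ℕ} (Q : QCube n) : Set (EuclideanSpace ℝ (Fin n)) :=
  {x | ∀ i, Q.a i ≤ x i ∧ x i < Q.a i + Q.l}

/-- The center of a cube. -/
def QCube.center {n : ℕ} (Q : QCube n) : EuclideanSpace ℝ (Fin n) :=
  (EuclideanSpace.equiv (Fin n) ℝ).symm fun i => Q.a i + Q.l / 2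

/-- The concentric dilate `γQ` of a cube `Q`. -/
def QCube.dilate {n : ℕ} (Q : QCube n) (γ : ℝ) : QCube n :=
  ⟨fun i => Q.a i + Q.l / 2 - γ * Q.l / 2, γ * Q.l⟩

/-- The `m`-weighted `α`-fractional Poisson integral
`P^α_m(Q,μ) = ∫ ℓ(Q)^m / (ℓ(Q)+|y−c_Q|)^{n+m−α} dμ(y)`; `P^α = P^α_1`. -/
def poissonM {n : ℕ} (α m : ℝ) (Q : QCube n)
    (μ : Measure (EuclideanSpace ℝ (Fin n))) : ℝ≥0∞ :=
  ∫⁻ y, ENNReal.ofReal (Q.l ^ m / (Q.l + dist y Q.center) ^ ((n : ℝ) + m - α)) ∂μ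

/-- `K` is an `α`-standard fractional kernel of order `1+δ` with constant `CCZ`. -/
def IsStandardKernel (n : ℕ) (α δ CCZ : ℝ)
    (K : EuclideanSpace ℝ (Fin n) → EuclideanSpace ℝ (Fin n) → ℝ) : Prop :=
  (∀ y, ContDiffOn ℝ 1 (fun x => K x y) {y}ᶜ) ∧
  (∀ x, ContDiffOn ℝ 1 (fun y => K x y) {x}ᶜ) ∧
  (∀ x y, x ≠ y → |K x y| ≤ CCZ * ‖x - y‖ ^ (α - (n : ℝ))) ∧
  (∀ x y, x ≠ y →
    ‖fderiv ℝ (fun z => K z y) x‖ + ‖fderiv ℝ (fun z => K x z) y‖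
      ≤ CCZ * ‖x - y‖ ^ (α - (n : ℝ) - 1)) ∧
  (∀ x x' y, x ≠ y → ‖x - x'‖ ≤ 1 / 2 * ‖x - y‖ →
    ‖fderiv ℝ (fun z => K z y) x - fderiv ℝ (fun z => K z y) x'‖
      ≤ CCZ * (‖x - x'‖ / ‖x - y‖) ^ δ * ‖x - y‖ ^ (α - (n : ℝ) - 1)) ∧
  (∀ x y y', x ≠ y → ‖y - y'‖ ≤ 1 / 2 * ‖x - y‖ →
    ‖fderiv ℝ (fun z => K x z) y - fderiv ℝ (fun z => K x z) y'‖
      ≤ CCZ * (‖y - y'‖ / ‖x - y‖) ^ δ * ‖x - y‖ ^ (α - (n : ℝ) - 1))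

/-- The `ω`-mean `m_J = ω(J)^{−1} ∫_J x dω(x)` of the identity over a cube `J`. -/
def wMean {n : ℕ} (ω : Measure (EuclideanSpace ℝ (Fin n))) (J : QCube n) :
    EuclideanSpace ℝ (Fin n) :=
  (ω J.pts).toReal⁻¹ • ∫ x in J.pts, x ∂ω

variable {n : ℕ}

lemma coord_le_norm (x : EuclideanSpace ℝ (Fin n)) (i : Fin n) : |x i| ≤ ‖x‖ := by
  rw [EuclideanSpace.norm_eq, ← Real.sqrt_sq_eq_abs]
  apply Real.sqrt_le_sqrt
  refine Finset.single_le_sum (f := fun j => ‖x j‖ ^ 2) (fun j _ => sq_nonneg _) (Finset.mem_univ i) |>.trans_eq' ?_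
  simp [Real.norm_eq_abs, sq_abs]

lemma norm_le_sqrt_mul (x : EuclideanSpace ℝ (Fin n)) (r : ℝ) (hr : 0 ≤ r) (h : ∀ i, |x i| ≤ r) :
    ‖x‖ ≤ Real.sqrt n * r := by
  rw [EuclideanSpace.norm_eq]
  have hb : ∑ i, ‖x i‖ ^ 2 ≤ n * r ^ 2 := by
    calc ∑ i, ‖x i‖ ^ 2 ≤ ∑ _i : Fin n, r ^ 2 := by
          apply Finset.sum_le_sum; intro i _
          have h2 : ‖x i‖ ≤ r := by rw [Real.norm_eq_abs]; exact h i
          nlinarith [norm_nonneg (x i)]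
      _ = n * r ^ 2 := by simp [mul_comm]
  calc Real.sqrt (∑ i, ‖x i‖ ^ 2) ≤ Real.sqrt (n * r ^ 2) := Real.sqrt_le_sqrt hb
    _ = Real.sqrt n * r := by rw [Real.sqrt_mul (Nat.cast_nonneg n), Real.sqrt_sq hr]

def QCube.cl {n : ℕ} (Q : QCube n) : Set (EuclideanSpace ℝ (Fin n)) :=
  {x | ∀ i, Q.a i ≤ x i ∧ x i ≤ Q.a i + Q.l}

lemma cl_eq (Q : QCube n) : Q.cl = ⋂ i, ((EuclideanSpace.proj (𝕜 := ℝ) i) ⁻¹' (Set.Icc (Q.a i) (Q.a i + Q.l))) := by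
  ext x; simp only [QCube.cl, Set.mem_iInter, Set.mem_setOf_eq, Set.mem_preimage, Set.mem_Icc]
  rfl

lemma measurable_pts (Q : QCube n) : MeasurableSet Q.pts := by
  have h : Q.pts = ⋂ i, ((EuclideanSpace.proj (𝕜 := ℝ) i) ⁻¹' (Set.Ico (Q.a i) (Q.a i + Q.l))) := by
    ext x; simp only [QCube.pts, Set.mem_iInter, Set.mem_setOf_eq, Set.mem_preimage, Set.mem_Ico]
    rfl
  rw [h]
  exact MeasurableSet.iInter fun i => (measurableSet_Ico).preimage (EuclideanSpace.proj (𝕜 := ℝ) i).continuous.measurable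

lemma convex_cl (Q : QCube n) : Convex ℝ Q.cl := by
  rw [cl_eq]
  exact convex_iInter fun i => (convex_Icc _ _).linear_preimage (EuclideanSpace.proj (𝕜 := ℝ) i).toLinearMap

lemma pts_subset_cl (Q : QCube n) : Q.pts ⊆ Q.cl := fun x hx i => ⟨(hx i).1, (hx i).2.le⟩

lemma cl_coord {Q : QCube n} {x : EuclideanSpace ℝ (Fin n)} (hx : x ∈ Q.cl) (i : Fin n) :
    |x i - Q.center i| ≤ Q.l / 2 := by
  have h1 := (hx i).1; have h2 := (hx i).2
  have : Q.center i = Q.a i + Q.l / 2 := rfl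
  rw [this, abs_le]; constructor <;> linarith

lemma cl_dist_center {Q : QCube n} (hl : 0 < Q.l) {x : EuclideanSpace ℝ (Fin n)} (hx : x ∈ Q.cl) :
    ‖x - Q.center‖ ≤ Real.sqrt n * (Q.l / 2) := by
  apply norm_le_sqrt_mul _ _ (by linarith)
  intro i
  exact cl_coord hx i

lemma cl_diam {Q : QCube n} (hl : 0 < Q.l) {x x' : EuclideanSpace ℝ (Fin n)}
    (hx : x ∈ Q.cl) (hx' : x' ∈ Q.cl) : ‖x - x'‖ ≤ Real.sqrt n * Q.l := by
  apply norm_le_sqrt_mul _ _ hl.le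
  intro i
  have h1 := (hx i).1; have h2 := (hx i).2; have h3 := (hx' i).1; have h4 := (hx' i).2
  have : (x - x') i = x i - x' i := rfl
  rw [this, abs_le]; constructor <;> linarith

lemma notin_dilate {Q : QCube n} {y : EuclideanSpace ℝ (Fin n)} (hy : y ∉ (Q.dilate 2).pts) :
    ∃ i, Q.l ≤ |y i - Q.center i| := by
  simp only [QCube.pts, QCube.dilate, Set.mem_setOf_eq, not_forall] at hy
  obtain ⟨i, hi⟩ := hy
  refine ⟨i, ?_⟩
  have hc : Q.center i = Q.a i + Q.l / 2 := rfl
  rw [not_and_or] at hi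
  rcases hi with h | h
  · push_neg at h
    exact le_abs.mpr (Or.inr (by simp only [hc]; linarith))
  · push_neg at h
    exact le_abs.mpr (Or.inl (by simp only [hc]; linarith))

lemma notin_dilate' {Q : QCube n} {y : EuclideanSpace ℝ (Fin n)} (hy : y ∉ (Q.dilate 2).pts) :
    Q.l ≤ ‖y - Q.center‖ := by
  obtain ⟨i, hi⟩ := notin_dilate hy
  have : (y - Q.center) i = y i - Q.center i := rfl
  calc Q.l ≤ |y i - Q.center i| := hi
    _ = |(y - Q.center) i| := by rw [this]
    _ ≤ ‖y - Q.center‖ := coord_le_norm _ i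

lemma sep_half {Q : QCube n} (hl : 0 < Q.l) {y x : EuclideanSpace ℝ (Fin n)}
    (hy : y ∉ (Q.dilate 2).pts) (hx : x ∈ Q.cl) : Q.l / 2 ≤ ‖x - y‖ := by
  obtain ⟨i, hi⟩ := notin_dilate hy
  have hxc := cl_coord hx i
  have : (x - y) i = x i - y i := rfl
  calc Q.l / 2 ≤ |x i - y i| := by
        have hb := abs_le.mp hxc
        rcases le_abs.mp hi with h | h
        · exact le_abs.mpr (Or.inr (by linarith))
        · exact le_abs.mpr (Or.inl (by linarith))
    _ = |(x - y) i| := by rw [this]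
    _ ≤ ‖x - y‖ := coord_le_norm _ i

lemma sep_main {Q : QCube n} (hn : 1 ≤ n) (hl : 0 < Q.l) {y x : EuclideanSpace ℝ (Fin n)}
    (hy : y ∉ (Q.dilate 2).pts) (hx : x ∈ Q.cl) :
    1 / (2 * (1 + 2 * Real.sqrt n)) * (Q.l + ‖y - Q.center‖) ≤ ‖x - y‖ := by
  set s := Real.sqrt n with hs
  have hs1 : 1 ≤ s := by
    rw [hs, show (1:ℝ) = Real.sqrt 1 by simp]
    exact Real.sqrt_le_sqrt (by exact_mod_cast hn)
  set d := ‖y - Q.center‖ with hd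
  have hdl : Q.l ≤ d := notin_dilate' hy
  have hhalf : Q.l / 2 ≤ ‖x - y‖ := sep_half hl hy hx
  by_cases hcase : d ≤ 2 * s * Q.l
  · have : 1 / (2 * (1 + 2 * s)) * (Q.l + d) ≤ Q.l / 2 := by
      rw [div_mul_eq_mul_div, one_mul, div_le_div_iff₀ (by positivity) (by norm_num)]
      nlinarith
    linarith
  · push_neg at hcase
    have htri : d ≤ ‖x - y‖ + ‖x - Q.center‖ := by
      calc d = ‖(y - x) + (x - Q.center)‖ := by rw [hd, sub_add_sub_cancel]
        _ ≤ ‖y - x‖ + ‖x - Q.center‖ := norm_add_le _ _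
        _ = ‖x - y‖ + ‖x - Q.center‖ := by rw [norm_sub_rev]
    have hxc : ‖x - Q.center‖ ≤ s * (Q.l / 2) := cl_dist_center hl hx
    have h34 : 3 * d / 4 ≤ ‖x - y‖ := by nlinarith
    have : 1 / (2 * (1 + 2 * s)) * (Q.l + d) ≤ 3 * d / 4 := by
      rw [div_mul_eq_mul_div, one_mul, div_le_div_iff₀ (by positivity) (by norm_num)]
      nlinarith
    linarith

lemma integrableOn_id {Q : QCube n} (hl : 0 < Q.l) (ω : Measure (EuclideanSpace ℝ (Fin n)))
    (hfin : ω Q.pts ≠ ⊤) : Integrable (fun x : EuclideanSpace ℝ (Fin n) => x) (ω.restrict Q.pts) := by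
  haveI : IsFiniteMeasure (ω.restrict Q.pts) :=
    ⟨by rw [Measure.restrict_apply_univ]; exact hfin.lt_top⟩
  apply Integrable.mono' (g := fun _ => ‖Q.center‖ + Real.sqrt n * (Q.l / 2)) (integrable_const _)
    continuous_id.aestronglyMeasurable.restrict
  rw [ae_restrict_iff' (measurable_pts Q)]
  filter_upwards with x
  intro hx
  have h1 : ‖x - Q.center‖ ≤ Real.sqrt n * (Q.l / 2) := cl_dist_center hl (pts_subset_cl Q hx)
  calc ‖(fun x : EuclideanSpace ℝ (Fin n) => x) x‖ = ‖Q.center + (x - Q.center)‖ := by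
        simp
    _ ≤ ‖Q.center‖ + ‖x - Q.center‖ := norm_add_le _ _
    _ ≤ ‖Q.center‖ + Real.sqrt n * (Q.l / 2) := by linarith

lemma wMean_mem_cl {Q : QCube n} (hl : 0 < Q.l) (ω : Measure (EuclideanSpace ℝ (Fin n)))
    (hne : ω Q.pts ≠ 0) (hfin : ω Q.pts ≠ ⊤) : wMean ω Q ∈ Q.cl := by
  haveI : IsFiniteMeasure (ω.restrict Q.pts) :=
    ⟨by rw [Measure.restrict_apply_univ]; exact hfin.lt_top⟩
  have ht : 0 < (ω Q.pts).toReal := ENNReal.toReal_pos hne hfin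
  have intId := integrableOn_id hl ω hfin
  intro i
  have hcoord : wMean ω Q i = (ω Q.pts).toReal⁻¹ * ∫ x in Q.pts, x i ∂ω := by
    have h1 : wMean ω Q i = (ω Q.pts).toReal⁻¹ * (∫ x in Q.pts, (x : EuclideanSpace ℝ (Fin n)) ∂ω) i := rfl
    rw [h1]
    congr 1
    have := (EuclideanSpace.proj (𝕜 := ℝ) i).integral_comp_comm intId
    exact this.symm
  have hintc : Integrable (fun x : EuclideanSpace ℝ (Fin n) => x i) (ω.restrict Q.pts) :=
    (EuclideanSpace.proj (𝕜 := ℝ) i).integrable_comp intId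
  constructor
  · rw [hcoord]
    have hlow : Q.a i * (ω Q.pts).toReal ≤ ∫ x in Q.pts, x i ∂ω := by
      have := setIntegral_mono_on (f := fun _ => Q.a i) (g := fun x : EuclideanSpace ℝ (Fin n) => x i)
        (integrable_const _) hintc (measurable_pts Q) (fun x hx => (hx i).1)
      simpa [mul_comm, measureReal_def] using this
    rw [inv_mul_eq_div, le_div_iff₀ ht]
    linarith
  · rw [hcoord]
    have hup : (∫ x in Q.pts, x i ∂ω) ≤ (Q.a i + Q.l) * (ω Q.pts).toReal := by
      have := setIntegral_mono_on (f := fun x : EuclideanSpace ℝ (Fin n) => x i) (g := fun _ => Q.a i + Q.l)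
        hintc (integrable_const _) (measurable_pts Q) (fun x hx => (hx i).2.le)
      simpa [mul_comm, measureReal_def] using this
    rw [inv_mul_eq_div, div_le_iff₀ ht]
    linarith

def cnC (n : ℕ) : ℝ := 1 / (2 * (1 + 2 * Real.sqrt n))

lemma cnC_pos (n : ℕ) : 0 < cnC n := by
  have := Real.sqrt_nonneg (n : ℝ)
  unfold cnC; positivity

def C1C (n : ℕ) (α δ : ℝ) : ℝ :=
  Real.sqrt n * (3/4 : ℝ) ^ (α - n - 1 - δ) * (cnC n) ^ (α - n - 1 - δ)
    + 2 * (cnC n) ^ (α - n - 1) * (4 * Real.sqrt n / cnC n) ^ δ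

lemma diffAtK {n : ℕ} {α δ CCZ : ℝ} {K : EuclideanSpace ℝ (Fin n) → EuclideanSpace ℝ (Fin n) → ℝ}
    (hK : IsStandardKernel n α δ CCZ K) (y z : EuclideanSpace ℝ (Fin n)) (hz : z ≠ y) :
    DifferentiableAt ℝ (fun w => K w y) z :=
  (((hK.1 y).contDiffAt (isOpen_compl_singleton.mem_nhds (by simpa using hz))).differentiableAt one_ne_zero)

lemma gradK_le {n : ℕ} {α δ CCZ : ℝ} {K : EuclideanSpace ℝ (Fin n) → EuclideanSpace ℝ (Fin n) → ℝ}
    (hK : IsStandardKernel n α δ CCZ K) (y z : EuclideanSpace ℝ (Fin n)) (hz : z ≠ y) :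
    ‖fderiv ℝ (fun w => K w y) z‖ ≤ CCZ * ‖z - y‖ ^ (α - (n : ℝ) - 1) := by
  have := hK.2.2.2.1 z y hz
  have h0 : (0:ℝ) ≤ ‖fderiv ℝ (fun w => K z w) y‖ := norm_nonneg _
  linarith

lemma core_est {n : ℕ} {α δ CCZ : ℝ} {K : EuclideanSpace ℝ (Fin n) → EuclideanSpace ℝ (Fin n) → ℝ}
    (hn : 1 ≤ n) (hαn : α < n) (hδ0 : 0 < δ) (hδ1 : δ ≤ 1) (hCCZ : 0 < CCZ)
    (hK : IsStandardKernel n α δ CCZ K) {Q : QCube n} (hl : 0 < Q.l)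
    {m : EuclideanSpace ℝ (Fin n)} (hm : m ∈ Q.cl)
    {y : EuclideanSpace ℝ (Fin n)} (hy : y ∉ (Q.dilate 2).pts)
    {x : EuclideanSpace ℝ (Fin n)} (hx : x ∈ Q.cl) :
    |K x y - K m y - (fderiv ℝ (fun z => K z y) m) (x - m)|
      ≤ C1C n α δ * CCZ * (Q.l ^ δ * (Q.l + ‖y - Q.center‖) ^ (α - n - 1 - δ)) * ‖x - m‖ := by
  have hs1 : 1 ≤ Real.sqrt n := by
    rw [show (1:ℝ) = Real.sqrt 1 by simp]
    exact Real.sqrt_le_sqrt (by exact_mod_cast hn)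
  set s := Real.sqrt n with hsdef
  set cn := cnC n with hcn
  have hcnp : 0 < cn := cnC_pos n
  set d := ‖y - Q.center‖ with hd
  have hdl : Q.l ≤ d := notin_dilate' hy
  have hld : 0 < Q.l + d := by linarith
  have hsep : ∀ z ∈ Q.cl, cn * (Q.l + d) ≤ ‖z - y‖ := fun z hz => sep_main hn hl hy hz
  have hcld : 0 < cn * (Q.l + d) := by positivity
  have hne : ∀ z ∈ Q.cl, z ≠ y := by
    intro z hz
    have := hsep z hz
    intro he
    rw [he, sub_self, norm_zero] at this
    linarith
  set D := ‖m - y‖ with hD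
  have hDsep : cn * (Q.l + d) ≤ D := hsep m hm
  have hDpos : 0 < D := lt_of_lt_of_le hcld hDsep
  have hdiam : ‖x - m‖ ≤ s * Q.l := cl_diam hl hx hm
  have he_neg : α - n - 1 - δ ≤ 0 := by push_cast; linarith
  have he_neg' : α - n - 1 ≤ 0 := by push_cast; linarith
  set φ := fderiv ℝ (fun z => K z y) m with hφ
  have hlen : (0:ℝ) ≤ ‖x - m‖ := norm_nonneg _
  by_cases hcase : ‖x - m‖ ≤ D / 4
  · -- smooth case
    have hseg : segment ℝ m x ⊆ Q.cl := (convex_cl Q).segment_subset hm hx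
    have hsegball : segment ℝ m x ⊆ Metric.closedBall m ‖x - m‖ := by
      apply (convex_closedBall m ‖x - m‖).segment_subset
      · simp
      · simp [Metric.mem_closedBall, dist_eq_norm]
    have key : ∀ z ∈ segment ℝ m x,
        ‖fderiv ℝ (fun w => K w y) z - φ‖
          ≤ CCZ * ‖x - m‖ ^ δ * ((3/4) * D) ^ (α - n - 1 - δ) := by
      intro z hz
      have hzm : ‖z - m‖ ≤ ‖x - m‖ := by
        have := hsegball hz
        simpa [Metric.mem_closedBall, dist_eq_norm] using this
      have hzy : (3/4) * D ≤ ‖z - y‖ := by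
        have : D ≤ ‖m - z‖ + ‖z - y‖ := by
          calc D = ‖(m - z) + (z - y)‖ := by rw [hD, sub_add_sub_cancel]
            _ ≤ ‖m - z‖ + ‖z - y‖ := norm_add_le _ _
        rw [norm_sub_rev] at this
        linarith
      have hzyp : 0 < ‖z - y‖ := lt_of_lt_of_le (by positivity) hzy
      have hzne : z ≠ y := by
        intro he; rw [he, sub_self, norm_zero] at hzyp; exact lt_irrefl _ hzyp
      have hcond : ‖z - m‖ ≤ 1 / 2 * ‖z - y‖ := by linarith
      have hH := hK.2.2.2.2.1 z m y hzne hcond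
      refine hH.trans ?_
      have h1 : (‖z - m‖ / ‖z - y‖) ^ δ ≤ (‖x - m‖ / ‖z - y‖) ^ δ :=
        Real.rpow_le_rpow (by positivity) (by gcongr) hδ0.le
      have h2 : (‖x - m‖ / ‖z - y‖) ^ δ * ‖z - y‖ ^ (α - (n:ℝ) - 1)
          = ‖x - m‖ ^ δ * ‖z - y‖ ^ (α - (n:ℝ) - 1 - δ) := by
        rw [Real.div_rpow hlen hzyp.le, Real.rpow_sub hzyp (α - n - 1) δ]
        field_simp
      have h3 : ‖z - y‖ ^ (α - (n:ℝ) - 1 - δ) ≤ ((3/4) * D) ^ (α - n - 1 - δ) :=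
        Real.rpow_le_rpow_of_nonpos (by positivity) hzy he_neg
      calc CCZ * (‖z - m‖ / ‖z - y‖) ^ δ * ‖z - y‖ ^ (α - (n:ℝ) - 1)
          ≤ CCZ * (‖x - m‖ / ‖z - y‖) ^ δ * ‖z - y‖ ^ (α - (n:ℝ) - 1) := by
            apply mul_le_mul_of_nonneg_right _ (Real.rpow_nonneg hzyp.le _)
            exact mul_le_mul_of_nonneg_left h1 hCCZ.le
        _ = CCZ * (‖x - m‖ ^ δ * ‖z - y‖ ^ (α - (n:ℝ) - 1 - δ)) := by
            rw [mul_assoc, h2]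
        _ ≤ CCZ * (‖x - m‖ ^ δ * ((3/4) * D) ^ (α - n - 1 - δ)) := by
            apply mul_le_mul_of_nonneg_left _ hCCZ.le
            exact mul_le_mul_of_nonneg_left h3 (Real.rpow_nonneg hlen _)
        _ = CCZ * ‖x - m‖ ^ δ * ((3/4) * D) ^ (α - n - 1 - δ) := by ring
    have hmvt := (convex_segment m x).norm_image_sub_le_of_norm_fderiv_le'
      (f := fun w => K w y) (φ := φ)
      (fun z hz => diffAtK hK y z (hne z (hseg hz)))
      key (left_mem_segment ℝ m x) (right_mem_segment ℝ m x)
    -- now massage constant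
    refine hmvt.trans ?_
    apply mul_le_mul_of_nonneg_right _ hlen
    have hA : ‖x - m‖ ^ δ ≤ s * Q.l ^ δ := by
      calc ‖x - m‖ ^ δ ≤ (s * Q.l) ^ δ := Real.rpow_le_rpow hlen hdiam hδ0.le
        _ = s ^ δ * Q.l ^ δ := Real.mul_rpow (by positivity) hl.le
        _ ≤ s ^ (1:ℝ) * Q.l ^ δ := by
            apply mul_le_mul_of_nonneg_right _ (Real.rpow_nonneg hl.le _)
            exact Real.rpow_le_rpow_of_exponent_le hs1 hδ1
        _ = s * Q.l ^ δ := by rw [Real.rpow_one]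
    have hB : ((3/4) * D) ^ (α - n - 1 - δ)
        ≤ (3/4 : ℝ) ^ (α - n - 1 - δ) * (cn ^ (α - n - 1 - δ) * (Q.l + d) ^ (α - n - 1 - δ)) := by
      rw [Real.mul_rpow (by norm_num) hDpos.le]
      apply mul_le_mul_of_nonneg_left _ (Real.rpow_nonneg (by norm_num) _)
      calc D ^ (α - (n:ℝ) - 1 - δ) ≤ (cn * (Q.l + d)) ^ (α - (n:ℝ) - 1 - δ) :=
            Real.rpow_le_rpow_of_nonpos hcld hDsep he_neg
        _ = cn ^ (α - (n:ℝ) - 1 - δ) * (Q.l + d) ^ (α - (n:ℝ) - 1 - δ) :=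
            Real.mul_rpow hcnp.le hld.le
    calc CCZ * ‖x - m‖ ^ δ * ((3/4) * D) ^ (α - n - 1 - δ)
        ≤ CCZ * (s * Q.l ^ δ) * ((3/4 : ℝ) ^ (α - n - 1 - δ) * (cn ^ (α - n - 1 - δ) * (Q.l + d) ^ (α - n - 1 - δ))) := by
          apply mul_le_mul
          · exact mul_le_mul_of_nonneg_left hA hCCZ.le
          · exact hB
          · positivity
          · positivity
      _ = (s * (3/4 : ℝ) ^ (α - n - 1 - δ) * cn ^ (α - n - 1 - δ)) * CCZ * (Q.l ^ δ * (Q.l + d) ^ (α - n - 1 - δ)) := by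
          ring
      _ ≤ C1C n α δ * CCZ * (Q.l ^ δ * (Q.l + d) ^ (α - n - 1 - δ)) := by
          apply mul_le_mul_of_nonneg_right _ (by positivity)
          apply mul_le_mul_of_nonneg_right _ hCCZ.le
          rw [C1C, ← hsdef, ← hcn]
          have : (0:ℝ) ≤ 2 * cn ^ (α - n - 1) * (4 * s / cn) ^ δ := by positivity
          linarith
  · -- rough case
    push_neg at hcase
    have hgb : ∀ z ∈ Q.cl, ‖fderiv ℝ (fun w => K w y) z‖ ≤ CCZ * (cn * (Q.l + d)) ^ (α - (n:ℝ) - 1) := by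
      intro z hz
      refine (gradK_le hK y z (hne z hz)).trans ?_
      apply mul_le_mul_of_nonneg_left _ hCCZ.le
      exact Real.rpow_le_rpow_of_nonpos hcld (hsep z hz) he_neg'
    have hmvt := (convex_cl Q).norm_image_sub_le_of_norm_fderiv_le
      (f := fun w => K w y)
      (fun z hz => diffAtK hK y z (hne z hz)) hgb hm hx
    have hφb : ‖φ (x - m)‖ ≤ CCZ * (cn * (Q.l + d)) ^ (α - (n:ℝ) - 1) * ‖x - m‖ := by
      calc ‖φ (x - m)‖ ≤ ‖φ‖ * ‖x - m‖ := φ.le_opNorm _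
        _ ≤ CCZ * (cn * (Q.l + d)) ^ (α - (n:ℝ) - 1) * ‖x - m‖ :=
            mul_le_mul_of_nonneg_right (hgb m hm) hlen
    have hsum : |K x y - K m y - φ (x - m)|
        ≤ 2 * CCZ * (cn * (Q.l + d)) ^ (α - (n:ℝ) - 1) * ‖x - m‖ := by
      have h1 : |K x y - K m y - φ (x - m)| ≤ |K x y - K m y| + ‖φ (x - m)‖ := by
        have := norm_sub_le (K x y - K m y) (φ (x - m))
        simpa [Real.norm_eq_abs] using this
      have h2 : |K x y - K m y| ≤ CCZ * (cn * (Q.l + d)) ^ (α - (n:ℝ) - 1) * ‖x - m‖ := by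
        simpa [Real.norm_eq_abs] using hmvt
      linarith
    refine hsum.trans ?_
    -- (l+d)^{α-n-1} ≤ (4 s / cn)^δ * l^δ * (l+d)^{α-n-1-δ}
    have hld4 : Q.l + d ≤ (4 * s / cn) * Q.l := by
      have h1 : cn * (Q.l + d) ≤ D := hDsep
      have h2 : D < 4 * ‖x - m‖ := by linarith
      have h3 : ‖x - m‖ ≤ s * Q.l := hdiam
      rw [div_mul_eq_mul_div, le_div_iff₀ hcnp]
      nlinarith
    have hkey : (Q.l + d) ^ (α - (n:ℝ) - 1) ≤ (4 * s / cn) ^ δ * (Q.l ^ δ * (Q.l + d) ^ (α - n - 1 - δ)) := by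
      have e1 : (Q.l + d) ^ (α - (n:ℝ) - 1) = (Q.l + d) ^ (α - (n:ℝ) - 1 - δ) * (Q.l + d) ^ δ := by
        rw [← Real.rpow_add hld]; ring_nf
      have e2 : (Q.l + d) ^ δ ≤ (4 * s / cn) ^ δ * Q.l ^ δ := by
        calc (Q.l + d) ^ δ ≤ ((4 * s / cn) * Q.l) ^ δ := Real.rpow_le_rpow hld.le hld4 hδ0.le
          _ = (4 * s / cn) ^ δ * Q.l ^ δ := Real.mul_rpow (by positivity) hl.le
      calc (Q.l + d) ^ (α - (n:ℝ) - 1) = (Q.l + d) ^ (α - (n:ℝ) - 1 - δ) * (Q.l + d) ^ δ := e1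
        _ ≤ (Q.l + d) ^ (α - (n:ℝ) - 1 - δ) * ((4 * s / cn) ^ δ * Q.l ^ δ) :=
            mul_le_mul_of_nonneg_left e2 (Real.rpow_nonneg hld.le _)
        _ = (4 * s / cn) ^ δ * (Q.l ^ δ * (Q.l + d) ^ (α - n - 1 - δ)) := by ring
    calc 2 * CCZ * (cn * (Q.l + d)) ^ (α - (n:ℝ) - 1) * ‖x - m‖
        = 2 * CCZ * (cn ^ (α - (n:ℝ) - 1) * (Q.l + d) ^ (α - (n:ℝ) - 1)) * ‖x - m‖ := by
          rw [Real.mul_rpow hcnp.le hld.le]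
      _ ≤ 2 * CCZ * (cn ^ (α - (n:ℝ) - 1) * ((4 * s / cn) ^ δ * (Q.l ^ δ * (Q.l + d) ^ (α - n - 1 - δ)))) * ‖x - m‖ := by
          apply mul_le_mul_of_nonneg_right _ hlen
          apply mul_le_mul_of_nonneg_left _ (by positivity)
          exact mul_le_mul_of_nonneg_left hkey (Real.rpow_nonneg hcnp.le _)
      _ = (2 * cn ^ (α - (n:ℝ) - 1) * (4 * s / cn) ^ δ) * CCZ * (Q.l ^ δ * (Q.l + d) ^ (α - n - 1 - δ)) * ‖x - m‖ := by
          ring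
      _ ≤ C1C n α δ * CCZ * (Q.l ^ δ * (Q.l + d) ^ (α - n - 1 - δ)) * ‖x - m‖ := by
          apply mul_le_mul_of_nonneg_right _ hlen
          apply mul_le_mul_of_nonneg_right _ (by positivity)
          apply mul_le_mul_of_nonneg_right _ hCCZ.le
          rw [C1C, ← hsdef, ← hcn]
          have : (0:ℝ) ≤ s * (3/4 : ℝ) ^ (α - n - 1 - δ) * cn ^ (α - n - 1 - δ) := by positivity
          linarith

/-- **Monotonicity Lemma.** For an `α`-standard fractional kernel `K` of
order `1+δ`, a cube `J` with `0 < ω(J) < ∞`, and a positive measure `μ` with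
`supp μ ∩ 2J = ∅` and `P^α(J,μ) < ∞`, every mean-zero `h ∈ L²(ω)` supported in `J`
satisfies: the iterated integral `∫ (∫_J (K(x,y) − K(m_J,y)) h(x) dω(x)) dμ(y)` converges
absolutely and is at most
`C·C_CZ·[P^α(J,μ)/ℓ(J) · |∫_J (x−m_J) h dω| + P^α_{1+δ}(J,μ)/ℓ(J) · ∫_J |x−m_J||h| dω]`,
with `C = C(n,α,δ)`; moreover when `∫ (ℓ(J)+|y−c_J|)^{α−n} dμ(y) < ∞` it equals
`∫∫ K(x,y) h(x) dω(x) dμ(y)`. -/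
theorem statement7 (n : ℕ) (α δ : ℝ) (hn : 1 ≤ n) (hα0 : 0 ≤ α) (hαn : α < n)
    (hδ0 : 0 < δ) (hδ1 : δ ≤ 1) :
    ∃ C : ℝ, 0 < C ∧
      ∀ CCZ : ℝ, 0 < CCZ →
      ∀ K : EuclideanSpace ℝ (Fin n) → EuclideanSpace ℝ (Fin n) → ℝ,
        IsStandardKernel n α δ CCZ K →
      ∀ ω μ : Measure (EuclideanSpace ℝ (Fin n)),
        IsLocallyFiniteMeasure ω → IsLocallyFiniteMeasure μ →
      ∀ J : QCube n, 0 < J.l → ω J.pts ≠ 0 → ω J.pts ≠ ⊤ →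
        -- `supp μ ∩ 2J = ∅` : every point of `2J` has a `μ`-null neighborhood
        (∀ x ∈ (J.dilate 2).pts, ∃ U ∈ nhds x, μ U = 0) →
        poissonM α 1 J μ ≠ ⊤ →
      ∀ h : EuclideanSpace ℝ (Fin n) → ℝ,
        MemLp h 2 ω → Function.support h ⊆ J.pts → (∫ x, h x ∂ω) = 0 →
        (∀ y ∉ (J.dilate 2).pts,
          IntegrableOn (fun x => (K x y - K (wMean ω J) y) * h x) J.pts ω) ∧
        Integrable (fun y => ∫ x in J.pts, (K x y - K (wMean ω J) y) * h x ∂ω) μ ∧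
        |∫ y, (∫ x in J.pts, (K x y - K (wMean ω J) y) * h x ∂ω) ∂μ|
          ≤ C * CCZ *
            ((poissonM α 1 J μ).toReal / J.l
                * ‖∫ x in J.pts, h x • (x - wMean ω J) ∂ω‖
              + (poissonM α (1 + δ) J μ).toReal / J.l
                * ∫ x in J.pts, ‖x - wMean ω J‖ * |h x| ∂ω) ∧
        ((∫⁻ y, ENNReal.ofReal ((J.l + dist y J.center) ^ (α - (n : ℝ))) ∂μ) ≠ ⊤ →
          (∫ y, (∫ x in J.pts, (K x y - K (wMean ω J) y) * h x ∂ω) ∂μ)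
            = ∫ y, (∫ x in J.pts, K x y * h x ∂ω) ∂μ) := by
  classical
  refine ⟨C1C n α δ + (cnC n) ^ (α - (n:ℝ) - 1) + 1, ?_, ?_⟩
  · have h1 : 0 < cnC n := cnC_pos n
    have h2 : (0:ℝ) ≤ C1C n α δ := by
      unfold C1C cnC; positivity
    have h3 : (0:ℝ) < (cnC n) ^ (α - (n:ℝ) - 1) := Real.rpow_pos_of_pos h1 _
    linarith
  intro CCZ hCCZ K hK ω μ hωloc hμloc J hl hω0 hωt hsupp hP1 h hh hsupph hint0
  set C : ℝ := C1C n α δ + (cnC n) ^ (α - (n:ℝ) - 1) + 1 with hC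
  have hcnp : 0 < cnC n := cnC_pos n
  have hC1nn : (0:ℝ) ≤ C1C n α δ := by unfold C1C cnC; positivity
  have hαn' : α - (n:ℝ) ≤ 0 := sub_nonpos.mpr hαn.le
  have hαn1 : α - (n:ℝ) - 1 ≤ 0 := by linarith
  set m : EuclideanSpace ℝ (Fin n) := wMean ω J with hmdef
  have hmcl : m ∈ J.cl := wMean_mem_cl hl ω hω0 hωt
  haveI : IsFiniteMeasure (ω.restrict J.pts) :=
    ⟨by rw [Measure.restrict_apply_univ]; exact hωt.lt_top⟩
  have h_aesm : AEStronglyMeasurable h (ω.restrict J.pts) := (hh.restrict _).aestronglyMeasurable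
  have hInth : Integrable h (ω.restrict J.pts) := (hh.restrict _).integrable one_le_two
  have hIntabs : Integrable (fun x => |h x|) (ω.restrict J.pts) := hInth.abs
  have hIntV : Integrable (fun x => h x • (x - m)) (ω.restrict J.pts) := by
    apply Integrable.mono' (g := fun x => (Real.sqrt n * J.l) * |h x|) (hIntabs.const_mul _)
      (h_aesm.smul ((continuous_id.sub continuous_const).aestronglyMeasurable.restrict))
    rw [ae_restrict_iff' (measurable_pts J)]
    filter_upwards with x hx
    have hd : ‖x - m‖ ≤ Real.sqrt n * J.l := cl_diam hl (pts_subset_cl J hx) hmcl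
    calc ‖h x • (x - m)‖ = |h x| * ‖x - m‖ := by
          rw [norm_smul, Real.norm_eq_abs]
      _ ≤ |h x| * (Real.sqrt n * J.l) := mul_le_mul_of_nonneg_left hd (abs_nonneg _)
      _ = Real.sqrt n * J.l * |h x| := by ring
  have hIntxm : Integrable (fun x => ‖x - m‖ * |h x|) (ω.restrict J.pts) := by
    apply Integrable.mono' (g := fun x => (Real.sqrt n * J.l) * |h x|) (hIntabs.const_mul _)
      (((continuous_id.sub continuous_const).norm.aestronglyMeasurable.restrict).mul
        hIntabs.aestronglyMeasurable)
    rw [ae_restrict_iff' (measurable_pts J)]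
    filter_upwards with x hx
    have hd : ‖x - m‖ ≤ Real.sqrt n * J.l := cl_diam hl (pts_subset_cl J hx) hmcl
    show ‖‖x - m‖ * |h x|‖ ≤ Real.sqrt n * J.l * |h x|
    rw [Real.norm_eq_abs, abs_of_nonneg (mul_nonneg (norm_nonneg _) (abs_nonneg _))]
    exact mul_le_mul_of_nonneg_right hd (abs_nonneg _)
  set v : EuclideanSpace ℝ (Fin n) := ∫ x in J.pts, h x • (x - m) ∂ω with hvdef
  set I2 : ℝ := ∫ x in J.pts, ‖x - m‖ * |h x| ∂ω with hI2def
  have hI2nn : 0 ≤ I2 := integral_nonneg fun x => mul_nonneg (norm_nonneg _) (abs_nonneg _)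
  -- basic separation facts
  have hclne : ∀ y, y ∉ J.cl → ∀ x ∈ J.cl, x ≠ y := fun y hy x hx he => hy (he ▸ hx)
  have h2Jne : ∀ y, y ∉ (J.dilate 2).pts → y ∉ J.cl := by
    intro y hy hyc
    have := sep_half hl hy hyc
    rw [sub_self, norm_zero] at this; linarith
  have hne_of_sep : ∀ (y x : EuclideanSpace ℝ (Fin n)) (r : ℝ), 0 < r → r ≤ ‖x - y‖ → x ≠ y := by
    intro y x r hr hsep he
    rw [he, sub_self, norm_zero] at hsep; linarith
  -- per-y integrability
  have haesm_inner : ∀ y, y ∉ J.cl →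
      AEStronglyMeasurable (fun x => (K x y - K m y) * h x) (ω.restrict J.pts) := by
    intro y hy
    have hcont : ContinuousOn (fun x => K x y) J.pts :=
      ((hK.1 y).continuousOn).mono (fun x hx => by
        simpa using (hclne y hy x (pts_subset_cl J hx)))
    exact ((hcont.sub continuousOn_const).aestronglyMeasurable (measurable_pts J)).mul h_aesm
  have haesm_innerK : ∀ y, y ∉ J.cl →
      AEStronglyMeasurable (fun x => K x y * h x) (ω.restrict J.pts) := by
    intro y hy
    have hcont : ContinuousOn (fun x => K x y) J.pts :=
      ((hK.1 y).continuousOn).mono (fun x hx => by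
        simpa using (hclne y hy x (pts_subset_cl J hx)))
    exact (hcont.aestronglyMeasurable (measurable_pts J)).mul h_aesm
  have hKb : ∀ (y : EuclideanSpace ℝ (Fin n)) (r : ℝ), 0 < r →
      (∀ x ∈ J.cl, r ≤ ‖x - y‖) → ∀ x ∈ J.cl, |K x y| ≤ CCZ * r ^ (α - (n:ℝ)) := by
    intro y r hr hs x hx
    refine (hK.2.2.1 x y (hne_of_sep y x r hr (hs x hx))).trans ?_
    exact mul_le_mul_of_nonneg_left (Real.rpow_le_rpow_of_nonpos hr (hs x hx) hαn') hCCZ.le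
  have hIntOn : ∀ (y : EuclideanSpace ℝ (Fin n)) (r : ℝ), 0 < r →
      (∀ x ∈ J.cl, r ≤ ‖x - y‖) →
      Integrable (fun x => (K x y - K m y) * h x) (ω.restrict J.pts) := by
    intro y r hr hs
    have hy : y ∉ J.cl := by
      intro hyc
      have := hs y hyc
      rw [sub_self, norm_zero] at this; linarith
    apply Integrable.mono' (g := fun x => (2 * CCZ * r ^ (α - (n:ℝ))) * |h x|)
      (hIntabs.const_mul _) (haesm_inner y hy)
    rw [ae_restrict_iff' (measurable_pts J)]
    filter_upwards with x hx
    have h1 := hKb y r hr hs x (pts_subset_cl J hx)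
    have h2 := hKb y r hr hs m hmcl
    have h3 : |K x y - K m y| ≤ 2 * CCZ * r ^ (α - (n:ℝ)) := by
      calc |K x y - K m y| ≤ |K x y| + |K m y| := abs_sub _ _
        _ ≤ 2 * CCZ * r ^ (α - (n:ℝ)) := by linarith
    rw [Real.norm_eq_abs, abs_mul]
    exact mul_le_mul_of_nonneg_right h3 (abs_nonneg _)
  have hIntOnK : ∀ (y : EuclideanSpace ℝ (Fin n)) (r : ℝ), 0 < r →
      (∀ x ∈ J.cl, r ≤ ‖x - y‖) →
      Integrable (fun x => K x y * h x) (ω.restrict J.pts) := by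
    intro y r hr hs
    have hy : y ∉ J.cl := by
      intro hyc
      have := hs y hyc
      rw [sub_self, norm_zero] at this; linarith
    apply Integrable.mono' (g := fun x => (CCZ * r ^ (α - (n:ℝ))) * |h x|)
      (hIntabs.const_mul _) (haesm_innerK y hy)
    rw [ae_restrict_iff' (measurable_pts J)]
    filter_upwards with x hx
    rw [Real.norm_eq_abs, abs_mul]
    exact mul_le_mul_of_nonneg_right (hKb y r hr hs x (pts_subset_cl J hx)) (abs_nonneg _)
  have hPart1 : ∀ y ∉ (J.dilate 2).pts,
      IntegrableOn (fun x => (K x y - K m y) * h x) J.pts ω := by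
    intro y hy
    exact hIntOn y (J.l / 2) (by linarith) (fun x hx => sep_half hl hy hx)
  -- pointwise bound on the inner integral
  have hFb : ∀ y, y ∉ (J.dilate 2).pts →
      |∫ x in J.pts, (K x y - K m y) * h x ∂ω|
        ≤ C1C n α δ * CCZ * (J.l ^ δ * (J.l + dist y J.center) ^ (α - (n:ℝ) - 1 - δ)) * I2
          + CCZ * (cnC n) ^ (α - (n:ℝ) - 1) * (J.l + dist y J.center) ^ (α - (n:ℝ) - 1) * ‖v‖ := by
    intro y hy
    have hdist : dist y J.center = ‖y - J.center‖ := dist_eq_norm _ _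
    set φ := fderiv ℝ (fun z => K z y) m with hφdef
    have hmy : m ≠ y := hclne y (h2Jne y hy) m hmcl
    have hld : 0 < J.l + dist y J.center := by
      have := dist_nonneg (x := y) (y := J.center); linarith
    have hsepm : cnC n * (J.l + dist y J.center) ≤ ‖m - y‖ := by
      rw [hdist]; exact sep_main hn hl hy hmcl
    have hφint : Integrable (fun x => φ (h x • (x - m))) (ω.restrict J.pts) :=
      φ.integrable_comp hIntV
    have hφeq : ∀ x : EuclideanSpace ℝ (Fin n), φ (h x • (x - m)) = φ (x - m) * h x := by
      intro x; rw [φ.map_smul, smul_eq_mul, mul_comm]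
    have hIntKK : Integrable (fun x => (K x y - K m y) * h x) (ω.restrict J.pts) :=
      hPart1 y hy
    have hIntE : Integrable (fun x => (K x y - K m y - φ (x - m)) * h x) (ω.restrict J.pts) := by
      have he : (fun x => (K x y - K m y - φ (x - m)) * h x)
          = fun x => (K x y - K m y) * h x - φ (h x • (x - m)) := by
        funext x; rw [hφeq]; ring
      rw [he]; exact hIntKK.sub hφint
    have hsplit : (∫ x in J.pts, (K x y - K m y) * h x ∂ω)
        = (∫ x in J.pts, (K x y - K m y - φ (x - m)) * h x ∂ω) + φ v := by
      have he : (fun x => (K x y - K m y) * h x)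
          = fun x => (K x y - K m y - φ (x - m)) * h x + φ (h x • (x - m)) := by
        funext x; rw [hφeq]; ring
      calc (∫ x in J.pts, (K x y - K m y) * h x ∂ω)
          = ∫ x in J.pts, ((K x y - K m y - φ (x - m)) * h x + φ (h x • (x - m))) ∂ω := by
            rw [← he]
        _ = (∫ x in J.pts, (K x y - K m y - φ (x - m)) * h x ∂ω)
            + ∫ x in J.pts, φ (h x • (x - m)) ∂ω := integral_add hIntE hφint
        _ = (∫ x in J.pts, (K x y - K m y - φ (x - m)) * h x ∂ω) + φ v := by
            rw [φ.integral_comp_comm hIntV]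
    have hE : |∫ x in J.pts, (K x y - K m y - φ (x - m)) * h x ∂ω|
        ≤ C1C n α δ * CCZ * (J.l ^ δ * (J.l + dist y J.center) ^ (α - (n:ℝ) - 1 - δ)) * I2 := by
      have hbnd : ∀ᵐ x ∂(ω.restrict J.pts), ‖(K x y - K m y - φ (x - m)) * h x‖
          ≤ (C1C n α δ * CCZ * (J.l ^ δ * (J.l + dist y J.center) ^ (α - (n:ℝ) - 1 - δ)))
            * (‖x - m‖ * |h x|) := by
        rw [ae_restrict_iff' (measurable_pts J)]
        filter_upwards with x hx
        have hcore := core_est hn hαn hδ0 hδ1 hCCZ hK hl hmcl hy (pts_subset_cl J hx)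
        rw [Real.norm_eq_abs, abs_mul, hdist]
        calc |K x y - K m y - φ (x - m)| * |h x|
            ≤ (C1C n α δ * CCZ * (J.l ^ δ * (J.l + ‖y - J.center‖) ^ (α - (n:ℝ) - 1 - δ)) * ‖x - m‖) * |h x| :=
              mul_le_mul_of_nonneg_right hcore (abs_nonneg _)
          _ = C1C n α δ * CCZ * (J.l ^ δ * (J.l + ‖y - J.center‖) ^ (α - (n:ℝ) - 1 - δ)) * (‖x - m‖ * |h x|) := by
              ring
      have hb := norm_integral_le_of_norm_le (hIntxm.const_mul _) hbnd
      rw [integral_const_mul _ _, Real.norm_eq_abs, ← hI2def] at hb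
      exact hb
    have hφv : |φ v| ≤ CCZ * (cnC n) ^ (α - (n:ℝ) - 1) * (J.l + dist y J.center) ^ (α - (n:ℝ) - 1) * ‖v‖ := by
      have h1 : ‖φ‖ ≤ CCZ * ((cnC n) * (J.l + dist y J.center)) ^ (α - (n:ℝ) - 1) := by
        refine (gradK_le hK y m hmy).trans ?_
        apply mul_le_mul_of_nonneg_left _ hCCZ.le
        exact Real.rpow_le_rpow_of_nonpos (by positivity) hsepm hαn1
      calc |φ v| = ‖φ v‖ := (Real.norm_eq_abs _).symm
        _ ≤ ‖φ‖ * ‖v‖ := φ.le_opNorm v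
        _ ≤ (CCZ * ((cnC n) * (J.l + dist y J.center)) ^ (α - (n:ℝ) - 1)) * ‖v‖ :=
            mul_le_mul_of_nonneg_right h1 (norm_nonneg _)
        _ = CCZ * (cnC n) ^ (α - (n:ℝ) - 1) * (J.l + dist y J.center) ^ (α - (n:ℝ) - 1) * ‖v‖ := by
            rw [Real.mul_rpow hcnp.le hld.le]; ring
    rw [hsplit]
    exact (abs_add_le _ _).trans (add_le_add hE hφv)
  -- μ vanishes on 2J
  have hμ2J : μ (J.dilate 2).pts = 0 := by
    apply measure_null_of_locally_null
    intro x hx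
    obtain ⟨U, hU, h0⟩ := hsupp x hx
    exact ⟨U, nhdsWithin_le_nhds hU, h0⟩
  have hae2J : ∀ᵐ y ∂μ, y ∉ (J.dilate 2).pts := by
    rw [ae_iff]
    have : {y | ¬ y ∉ (J.dilate 2).pts} = (J.dilate 2).pts := by ext y; simp
    rw [this]; exact hμ2J
  -- Poisson integrals
  set g1 : EuclideanSpace ℝ (Fin n) → ℝ := fun y => (J.l + dist y J.center) ^ (α - (n:ℝ) - 1) with hg1def
  set g2 : EuclideanSpace ℝ (Fin n) → ℝ := fun y => J.l ^ δ * (J.l + dist y J.center) ^ (α - (n:ℝ) - 1 - δ) with hg2def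
  have hldpos : ∀ y : EuclideanSpace ℝ (Fin n), 0 < J.l + dist y J.center := by
    intro y; have := dist_nonneg (x := y) (y := J.center); linarith
  have hg1cont : Continuous g1 := by
    apply Continuous.rpow_const (continuous_const.add (continuous_id.dist continuous_const))
    intro y; exact Or.inl (ne_of_gt (hldpos y))
  have hg2cont : Continuous g2 := by
    apply Continuous.mul continuous_const
    apply Continuous.rpow_const (continuous_const.add (continuous_id.dist continuous_const))
    intro y; exact Or.inl (ne_of_gt (hldpos y))
  have hg1nn : ∀ y, 0 ≤ g1 y := fun y => Real.rpow_nonneg (hldpos y).le _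
  have hg2nn : ∀ y, 0 ≤ g2 y := fun y =>
    mul_nonneg (Real.rpow_nonneg hl.le _) (Real.rpow_nonneg (hldpos y).le _)
  have hkey1 : ∀ y : EuclideanSpace ℝ (Fin n),
      J.l * g1 y = J.l ^ (1:ℝ) / (J.l + dist y J.center) ^ ((n:ℝ) + 1 - α) := by
    intro y
    simp only [hg1def]
    have hexp : α - (n:ℝ) - 1 = -((n:ℝ) + 1 - α) := by ring
    rw [Real.rpow_one, hexp, Real.rpow_neg (hldpos y).le, div_eq_mul_inv]
  have hkey2 : ∀ y : EuclideanSpace ℝ (Fin n),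
      J.l * g2 y = J.l ^ (1 + δ) / (J.l + dist y J.center) ^ ((n:ℝ) + (1 + δ) - α) := by
    intro y
    simp only [hg2def]
    have hexp : α - (n:ℝ) - 1 - δ = -((n:ℝ) + (1 + δ) - α) := by ring
    rw [hexp, Real.rpow_neg (hldpos y).le, ← mul_assoc,
      show J.l * J.l ^ δ = J.l ^ (1 + δ) from by rw [Real.rpow_add hl, Real.rpow_one],
      div_eq_mul_inv]
  have hL1 : ENNReal.ofReal J.l * (∫⁻ y, ENNReal.ofReal (g1 y) ∂μ) = poissonM α 1 J μ := by
    rw [← lintegral_const_mul' _ _ ENNReal.ofReal_ne_top]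
    unfold poissonM
    congr 1
    funext y
    rw [← ENNReal.ofReal_mul hl.le, hkey1 y]
  have hL2 : ENNReal.ofReal J.l * (∫⁻ y, ENNReal.ofReal (g2 y) ∂μ) = poissonM α (1 + δ) J μ := by
    rw [← lintegral_const_mul' _ _ ENNReal.ofReal_ne_top]
    unfold poissonM
    congr 1
    funext y
    rw [← ENNReal.ofReal_mul hl.le, hkey2 y]
  have hg2le : ∀ y, g2 y ≤ g1 y := by
    intro y
    simp only [hg1def, hg2def]
    have h1 : (J.l + dist y J.center) ^ (α - (n:ℝ) - 1 - δ)
        = (J.l + dist y J.center) ^ (α - (n:ℝ) - 1) * ((J.l + dist y J.center) ^ δ)⁻¹ := by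
      have hexp : α - (n:ℝ) - 1 - δ = (α - (n:ℝ) - 1) + (-δ) := by ring
      rw [hexp, Real.rpow_add (hldpos y), Real.rpow_neg (hldpos y).le]
    rw [h1]
    have h2 : J.l ^ δ ≤ (J.l + dist y J.center) ^ δ :=
      Real.rpow_le_rpow hl.le (by have := dist_nonneg (x := y) (y := J.center); linarith) hδ0.le
    have h3 : 0 < (J.l + dist y J.center) ^ δ := Real.rpow_pos_of_pos (hldpos y) _
    calc J.l ^ δ * ((J.l + dist y J.center) ^ (α - (n:ℝ) - 1) * ((J.l + dist y J.center) ^ δ)⁻¹)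
        = (J.l ^ δ / (J.l + dist y J.center) ^ δ) * (J.l + dist y J.center) ^ (α - (n:ℝ) - 1) := by
          ring
      _ ≤ 1 * (J.l + dist y J.center) ^ (α - (n:ℝ) - 1) := by
          apply mul_le_mul_of_nonneg_right _ (Real.rpow_nonneg (hldpos y).le _)
          rw [div_le_one h3]; exact h2
      _ = (J.l + dist y J.center) ^ (α - (n:ℝ) - 1) := one_mul _
  have hP2 : poissonM α (1 + δ) J μ ≠ ⊤ := by
    rw [← hL2]
    have hle : (∫⁻ y, ENNReal.ofReal (g2 y) ∂μ) ≤ ∫⁻ y, ENNReal.ofReal (g1 y) ∂μ :=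
      lintegral_mono fun y => ENNReal.ofReal_le_ofReal (hg2le y)
    have hfin1 : (∫⁻ y, ENNReal.ofReal (g1 y) ∂μ) ≠ ⊤ := by
      intro htop
      rw [htop, ENNReal.mul_top (by simpa [ENNReal.ofReal_eq_zero] using hl)] at hL1
      exact hP1 hL1.symm
    exact ENNReal.mul_ne_top ENNReal.ofReal_ne_top (lt_of_le_of_lt hle hfin1.lt_top).ne
  have hfin1 : (∫⁻ y, ENNReal.ofReal (g1 y) ∂μ) ≠ ⊤ := by
    intro htop
    rw [htop, ENNReal.mul_top (by simpa [ENNReal.ofReal_eq_zero] using hl)] at hL1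
    exact hP1 hL1.symm
  have hfin2 : (∫⁻ y, ENNReal.ofReal (g2 y) ∂μ) ≠ ⊤ := by
    have hle : (∫⁻ y, ENNReal.ofReal (g2 y) ∂μ) ≤ ∫⁻ y, ENNReal.ofReal (g1 y) ∂μ :=
      lintegral_mono fun y => ENNReal.ofReal_le_ofReal (hg2le y)
    exact (lt_of_le_of_lt hle hfin1.lt_top).ne
  have hIntg1 : Integrable g1 μ := by
    refine ⟨hg1cont.aestronglyMeasurable, ?_⟩
    rw [hasFiniteIntegral_iff_ofReal (ae_of_all _ hg1nn)]
    exact hfin1.lt_top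
  have hIntg2 : Integrable g2 μ := by
    refine ⟨hg2cont.aestronglyMeasurable, ?_⟩
    rw [hasFiniteIntegral_iff_ofReal (ae_of_all _ hg2nn)]
    exact hfin2.lt_top
  have hIg1 : ∫ y, g1 y ∂μ = (poissonM α 1 J μ).toReal / J.l := by
    have := ofReal_integral_eq_lintegral_ofReal hIntg1 (ae_of_all _ hg1nn)
    have h2 : ∫ y, g1 y ∂μ = (∫⁻ y, ENNReal.ofReal (g1 y) ∂μ).toReal := by
      rw [← this, ENNReal.toReal_ofReal (integral_nonneg hg1nn)]
    rw [h2, ← hL1, ENNReal.toReal_mul, ENNReal.toReal_ofReal hl.le]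
    field_simp
  have hIg2 : ∫ y, g2 y ∂μ = (poissonM α (1 + δ) J μ).toReal / J.l := by
    have := ofReal_integral_eq_lintegral_ofReal hIntg2 (ae_of_all _ hg2nn)
    have h2 : ∫ y, g2 y ∂μ = (∫⁻ y, ENNReal.ofReal (g2 y) ∂μ).toReal := by
      rw [← this, ENNReal.toReal_ofReal (integral_nonneg hg2nn)]
    rw [h2, ← hL2, ENNReal.toReal_mul, ENNReal.toReal_ofReal hl.le]
    field_simp
  -- measurability of the outer integrand
  set F : EuclideanSpace ℝ (Fin n) → ℝ := fun y => ∫ x in J.pts, (K x y - K m y) * h x ∂ω with hFdef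
  set U : Set (EuclideanSpace ℝ (Fin n)) := {y | ∃ i, 3 * J.l / 4 < |y i - J.center i|} with hUdef
  have hUopen : IsOpen U := by
    have : U = ⋃ i, (fun y : EuclideanSpace ℝ (Fin n) => |y i - J.center i|) ⁻¹' Set.Ioi (3 * J.l / 4) := by
      ext y; simp [hUdef]
    rw [this]
    exact isOpen_iUnion fun i => (isOpen_Ioi.preimage (by
      exact ((EuclideanSpace.proj (𝕜 := ℝ) i).continuous.sub continuous_const).abs))
  have hcomplU : (J.dilate 2).ptsᶜ ⊆ U := by
    intro y hy
    obtain ⟨i, hi⟩ := notin_dilate hy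
    exact ⟨i, by linarith⟩
  have hUsep : ∀ y₀ ∈ U, ∀ y ∈ Metric.ball y₀ (J.l / 8), ∀ x ∈ J.cl, J.l / 8 ≤ ‖x - y‖ := by
    intro y₀ hy₀ y hyb x hx
    obtain ⟨i, hi⟩ := hy₀
    have h1 : |x i - J.center i| ≤ J.l / 2 := cl_coord hx i
    have h2 : |y i - y₀ i| ≤ ‖y - y₀‖ := by
      have : (y - y₀) i = y i - y₀ i := rfl
      rw [← this]; exact coord_le_norm _ i
    have h3 : ‖y - y₀‖ < J.l / 8 := by
      rw [← dist_eq_norm]; exact hyb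
    have h4 : |(x - y) i| ≤ ‖x - y‖ := coord_le_norm _ i
    have h5 : (x - y) i = x i - y i := rfl
    have habs : J.l / 8 ≤ |x i - y i| := by
      have e1 := abs_le.mp h1
      have e2 := abs_le.mp h2
      rcases le_abs.mp hi.le with hc | hc
      · exact le_abs.mpr (Or.inr (by linarith))
      · exact le_abs.mpr (Or.inl (by linarith))
    calc J.l / 8 ≤ |x i - y i| := habs
      _ = |(x - y) i| := by rw [h5]
      _ ≤ ‖x - y‖ := h4
  have hFcontU : ∀ y₀ ∈ U, ContinuousAt F y₀ := by
    intro y₀ hy₀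
    have hball : Metric.ball y₀ (J.l / 8) ∈ nhds y₀ := Metric.ball_mem_nhds y₀ (by linarith)
    apply continuousAt_of_dominated (bound := fun x => (2 * CCZ * (J.l / 8) ^ (α - (n:ℝ))) * |h x|)
    · filter_upwards [hball] with y hy
      have hyc : y ∉ J.cl := by
        intro hyc
        have := hUsep y₀ hy₀ y hy y hyc
        rw [sub_self, norm_zero] at this; linarith
      exact haesm_inner y hyc
    · filter_upwards [hball] with y hy
      rw [ae_restrict_iff' (measurable_pts J)]
      filter_upwards with x hx
      have hsep := hUsep y₀ hy₀ y hy
      have h1 := hKb y (J.l / 8) (by linarith) hsep x (pts_subset_cl J hx)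
      have h2 := hKb y (J.l / 8) (by linarith) hsep m hmcl
      rw [Real.norm_eq_abs, abs_mul]
      have h3 : |K x y - K m y| ≤ 2 * CCZ * (J.l / 8) ^ (α - (n:ℝ)) := by
        calc |K x y - K m y| ≤ |K x y| + |K m y| := abs_sub _ _
          _ ≤ 2 * CCZ * (J.l / 8) ^ (α - (n:ℝ)) := by linarith
      exact mul_le_mul_of_nonneg_right h3 (abs_nonneg _)
    · exact hIntabs.const_mul _
    · rw [ae_restrict_iff' (measurable_pts J)]
      filter_upwards with x hx
      have hy₀x : J.l / 8 ≤ ‖x - y₀‖ :=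
        hUsep y₀ hy₀ y₀ (Metric.mem_ball_self (by linarith)) x (pts_subset_cl J hx)
      have hy₀m : J.l / 8 ≤ ‖m - y₀‖ :=
        hUsep y₀ hy₀ y₀ (Metric.mem_ball_self (by linarith)) m hmcl
      have hxne : y₀ ≠ x := (hne_of_sep y₀ x (J.l/8) (by linarith) hy₀x).symm
      have hmne : y₀ ≠ m := (hne_of_sep y₀ m (J.l/8) (by linarith) hy₀m).symm
      have hc1 : ContinuousAt (fun y => K x y) y₀ :=
        ((hK.2.1 x).continuousOn).continuousAt (isOpen_compl_singleton.mem_nhds (by simpa using hxne))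
      have hc2 : ContinuousAt (fun y => K m y) y₀ :=
        ((hK.2.1 m).continuousOn).continuousAt (isOpen_compl_singleton.mem_nhds (by simpa using hmne))
      exact (hc1.sub hc2).mul continuousAt_const
  have hFaesm : AEStronglyMeasurable F μ := by
    have hrestr : μ.restrict U = μ := by
      apply Measure.restrict_eq_self_of_ae_mem
      filter_upwards [hae2J] with y hy
      exact hcomplU hy
    rw [← hrestr]
    exact (ContinuousOn.aestronglyMeasurable
      (fun y hy => (hFcontU y hy).continuousWithinAt) hUopen.measurableSet)
  -- integrability of F over μ
  set G : EuclideanSpace ℝ (Fin n) → ℝ := fun y =>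
    C1C n α δ * CCZ * I2 * g2 y + CCZ * (cnC n) ^ (α - (n:ℝ) - 1) * ‖v‖ * g1 y with hGdef
  have hIntG : Integrable G μ := (hIntg2.const_mul _).add (hIntg1.const_mul _)
  have hFle : ∀ᵐ y ∂μ, ‖F y‖ ≤ G y := by
    filter_upwards [hae2J] with y hy
    rw [Real.norm_eq_abs]
    refine (hFb y hy).trans ?_
    simp only [hGdef, hg1def, hg2def]
    apply le_of_eq
    ring
  have hIntF : Integrable F μ := Integrable.mono' hIntG hFaesm hFle
  have hJint0 : ∫ x in J.pts, h x ∂ω = 0 := by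
    rw [setIntegral_eq_integral_of_forall_compl_eq_zero (fun x hx => ?_)]
    · exact hint0
    · by_contra hne
      exact hx (hsupph hne)
  refine ⟨hPart1, hIntF, ?_, ?_⟩
  · -- main bound
    have hbound := norm_integral_le_of_norm_le hIntG hFle
    rw [Real.norm_eq_abs] at hbound
    refine hbound.trans ?_
    have hGint : ∫ y, G y ∂μ
        = C1C n α δ * CCZ * I2 * ((poissonM α (1 + δ) J μ).toReal / J.l)
          + CCZ * (cnC n) ^ (α - (n:ℝ) - 1) * ‖v‖ * ((poissonM α 1 J μ).toReal / J.l) := by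
      simp only [hGdef]
      rw [integral_add (hIntg2.const_mul _) (hIntg1.const_mul _), integral_const_mul,
        hIg2, integral_const_mul, hIg1]
    rw [hGint]
    have hcn1 : (0:ℝ) < (cnC n) ^ (α - (n:ℝ) - 1) := Real.rpow_pos_of_pos hcnp _
    have ht1 : (0:ℝ) ≤ (poissonM α 1 J μ).toReal / J.l := by positivity
    have ht2 : (0:ℝ) ≤ (poissonM α (1 + δ) J μ).toReal / J.l := by positivity
    have hvnn : (0:ℝ) ≤ ‖v‖ := norm_nonneg _
    have hCb1 : C1C n α δ ≤ C := by rw [hC]; linarith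
    have hCb2 : (cnC n) ^ (α - (n:ℝ) - 1) ≤ C := by rw [hC]; linarith
    calc C1C n α δ * CCZ * I2 * ((poissonM α (1 + δ) J μ).toReal / J.l)
          + CCZ * (cnC n) ^ (α - (n:ℝ) - 1) * ‖v‖ * ((poissonM α 1 J μ).toReal / J.l)
        ≤ C * CCZ * I2 * ((poissonM α (1 + δ) J μ).toReal / J.l)
          + CCZ * C * ‖v‖ * ((poissonM α 1 J μ).toReal / J.l) := by
          apply add_le_add
          · apply mul_le_mul_of_nonneg_right _ ht2
            apply mul_le_mul_of_nonneg_right _ hI2nn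
            exact mul_le_mul_of_nonneg_right hCb1 hCCZ.le
          · apply mul_le_mul_of_nonneg_right _ ht1
            apply mul_le_mul_of_nonneg_right _ hvnn
            exact mul_le_mul_of_nonneg_left hCb2 hCCZ.le
      _ = C * CCZ * ((poissonM α 1 J μ).toReal / J.l * ‖v‖
          + (poissonM α (1 + δ) J μ).toReal / J.l * I2) := by ring
  · -- the "moreover" equality (holds unconditionally)
    intro _
    apply integral_congr_ae
    filter_upwards [hae2J] with y hy
    have hIntK : Integrable (fun x => K x y * h x) (ω.restrict J.pts) :=
      hIntOnK y (J.l / 2) (by linarith) (fun x hx => sep_half hl hy hx)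
    have hIntc : Integrable (fun x => K m y * h x) (ω.restrict J.pts) :=
      hInth.const_mul _
    have he : (fun x => (K x y - K m y) * h x) = fun x => K x y * h x - K m y * h x := by
      funext x; ring
    rw [he, integral_sub hIntK hIntc, integral_const_mul _ _, hJint0, mul_zero, sub_zero]
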